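/- For every α > 4/9 there exist a, b > 0 with a ≠ b such that T(a,b) < α·D(a,b) + (1−α)·H(a,b); in fact, there exists δ > 0 such that this inequality holds for all a, b > 0 with a/b ∈ (1, 1+δ). -/

import Mathlib

noncomputable def harmonicMean (a b : ℝ) : ℝ := 2 * a * b / (a + b)

noncomputable def seiffertT (a b : ℝ) : ℝ := (a - b) / (2 * Real.arctan ((a - b) / (a + b)))

noncomputable def contraD (a b : ℝ) : ℝ := (a ^ 3 + b ^ 3) / (a ^ 2 + b ^ 2)

lemma arctan_gt_cubic (t : ℝ) (ht : 0 < t) : t - t^3/3 < Real.arctan t := by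
  have hmono : StrictMonoOn (fun x : ℝ => Real.arctan x - x + x^3/3) (Set.Ici (0:ℝ)) := by
    apply strictMonoOn_of_deriv_pos (convex_Ici 0)
    · exact ((Real.continuous_arctan.sub continuous_id).add (by continuity)).continuousOn
    · intro x hx
      rw [interior_Ici] at hx
      have hx0 : (0:ℝ) < x := hx
      have hd : HasDerivAt (fun x : ℝ => Real.arctan x - x + x^3/3)
          (1/(1+x^2) - 1 + x^2) x := by
        have h1 := Real.hasDerivAt_arctan x
        have h2 : HasDerivAt (fun x : ℝ => x^3/3) (x^2) x := by
          have := (hasDerivAt_pow 3 x).div_const 3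
          exact this.congr_deriv (by norm_num)
        exact (h1.sub (hasDerivAt_id x)).add h2
      rw [hd.deriv]
      have h1 : (0:ℝ) < 1 + x^2 := by positivity
      have : 1/(1+x^2) - 1 + x^2 = x^4/(1+x^2) := by field_simp; ring
      rw [this]; positivity
  have h := hmono (Set.self_mem_Ici) (Set.mem_Ici.2 ht.le) ht
  simp [Real.arctan_zero] at h
  linarith

lemma key_poly (α u : ℝ) (hα : 4/9 < α) (hu : 0 < u) (hu2 : u < 1/2)
    (hε : u * (2*α + 2/9) < 3*α - 4/3) :
    1 + u < (1 - u/3) * (1 + 3*α*u + (α-1)*u^2) := by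
  nlinarith [mul_pos hu hu, mul_lt_mul_of_pos_left hε hu, sq_nonneg u,
    mul_pos (mul_pos hu hu) hu]

lemma key_ineq (α t : ℝ) (hα : 4/9 < α) (ht : 0 < t) (ht2 : t^2 < 1/2)
    (hε : t^2 * (2*α + 2/9) < 3*α - 4/3) :
    t / Real.arctan t < α * ((1+3*t^2)/(1+t^2)) + (1-α) * (1 - t^2) := by
  set u := t^2 with hudef
  have hu : 0 < u := by positivity
  have hpoly := key_poly α u hα hu ht2 hε
  have hN : 0 < 1 + 3*α*u + (α-1)*u^2 := by nlinarith
  have hA := arctan_gt_cubic t ht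
  have hApos : 0 < Real.arctan t := by simpa using Real.arctan_strictMono ht
  have h1u : (0:ℝ) < 1 + u := by linarith
  have hRHS : α * ((1+3*t^2)/(1+t^2)) + (1-α) * (1 - t^2)
      = (1 + 3*α*u + (α-1)*u^2) / (1 + u) := by
    rw [hudef]
    have : (1:ℝ) + t^2 ≠ 0 := by positivity
    field_simp
    ring
  rw [hRHS, div_lt_div_iff₀ hApos h1u]
  calc t * (1 + u) < (1 + 3*α*u + (α-1)*u^2) * (t - t^3/3) := by
        have heq : (1 + 3*α*u + (α-1)*u^2) * (t - t^3/3)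
            = t * ((1 - u/3) * (1 + 3*α*u + (α-1)*u^2)) := by rw [hudef]; ring
        rw [heq]
        exact mul_lt_mul_of_pos_left hpoly ht
    _ < (1 + 3*α*u + (α-1)*u^2) * Real.arctan t := by
        exact mul_lt_mul_of_pos_left hA hN

theorem stmt_3 (α : ℝ) (hα : 4 / 9 < α) :
    ∃ δ > (0 : ℝ), ∀ a b : ℝ, 0 < a → 0 < b → a / b ∈ Set.Ioo (1 : ℝ) (1 + δ) →
      seiffertT a b < α * contraD a b + (1 - α) * harmonicMean a b := by
  have hα1 : 0 < 3*α - 4/3 := by linarith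
  have hα2 : 0 < 2*α + 2/9 := by linarith
  set ε := min ((3*α - 4/3)/(2*α + 2/9)) (1/2) with hεdef
  have hεpos : 0 < ε := lt_min (div_pos hα1 hα2) (by norm_num)
  refine ⟨Real.sqrt ε, Real.sqrt_pos.2 hεpos, ?_⟩
  rintro a b ha hb ⟨h1, h2⟩
  have hba : b < a := by
    have := (one_lt_div hb).1 h1
    linarith
  have habpos : 0 < a + b := by linarith
  set t := (a - b)/(a + b) with htdef
  have ht0 : 0 < t := div_pos (by linarith) habpos
  -- t < sqrt ε / 2
  have htb : t < Real.sqrt ε / 2 := by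
    have h2' : a < (1 + Real.sqrt ε) * b := by
      rw [div_lt_iff₀ hb] at h2; linarith
    have : t < (a - b)/(2*b) := by
      apply div_lt_div_of_pos_left (by linarith) (by linarith) (by linarith)
    have h3 : (a - b)/(2*b) < Real.sqrt ε / 2 := by
      rw [div_lt_div_iff₀ (by linarith) (by norm_num)]
      nlinarith [Real.sqrt_pos.2 hεpos]
    linarith
  have htsq : t^2 < ε := by
    have h4 : t^2 < (Real.sqrt ε / 2)^2 := by nlinarith
    have h5 : (Real.sqrt ε / 2)^2 = ε / 4 := by
      rw [div_pow, Real.sq_sqrt hεpos.le]; norm_num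
    rw [h5] at h4
    linarith
  have ht2 : t^2 < 1/2 := lt_of_lt_of_le htsq (min_le_right _ _)
  have hε' : t^2 * (2*α + 2/9) < 3*α - 4/3 := by
    have := lt_of_lt_of_le htsq (min_le_left _ _)
    rw [lt_div_iff₀ hα2] at this
    linarith
  have hkey := key_ineq α t hα ht0 ht2 hε'
  -- rewrite the means in terms of s and t
  have hApos : 0 < Real.arctan t := by simpa using Real.arctan_strictMono ht0
  have h1t : (0:ℝ) < 1 + t^2 := by positivity
  have hab2 : (0:ℝ) < a^2 + b^2 := by positivity
  have hT : seiffertT a b = ((a+b)/2) * (t / Real.arctan t) := by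
    rw [seiffertT, ← htdef, htdef]
    field_simp
  have hH : harmonicMean a b = ((a+b)/2) * (1 - t^2) := by
    rw [harmonicMean, htdef]
    field_simp [habpos.ne']
    ring
  have hD : contraD a b = ((a+b)/2) * ((1+3*t^2)/(1+t^2)) := by
    rw [contraD, htdef]
    have hne : ((a+b)^2 + (a-b)^2 : ℝ) ≠ 0 := by positivity
    field_simp [habpos.ne', hab2.ne']
    ring
  rw [hT, hH, hD]
  have hs : (0:ℝ) < (a+b)/2 := by linarith
  calc ((a+b)/2) * (t / Real.arctan t)
      < ((a+b)/2) * (α * ((1+3*t^2)/(1+t^2)) + (1-α) * (1 - t^2)) :=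
        mul_lt_mul_of_pos_left hkey hs
    _ = α * (((a+b)/2) * ((1+3*t^2)/(1+t^2))) + (1-α) * (((a+b)/2) * (1 - t^2)) := by ring
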